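/- For every nonnegative integer n and all s, the following connection formula holds: (−s)_n (s+β1)_n = Σ_{j=0}^{n} [(−1)^j · 2^{2j−2n} · (n−j+1)_j · (β1+j−1/2)_{2n−2j} / j!] · F_j(x(s)), where F_j(x(s)) = (−4)^{−j} (−β1−2s+1/2)_j (β1+2s+1/2)_j. -/

import Mathlib

/-- The Pochhammer symbol `(a)_n = a (a+1) ⋯ (a+n-1)`. -/
noncomputable def poch (a : ℝ) (n : ℕ) : ℝ := ∏ k ∈ Finset.range n, (a + (k : ℝ))

/-- Divided-difference operator `𝔻_x` associated with the lattice `x`. -/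
noncomputable def Dlat (x : ℝ → ℝ) (f : ℝ → ℝ) (s : ℝ) : ℝ :=
  (f (s + 1/2) - f (s - 1/2)) / (x (s + 1/2) - x (s - 1/2))

/-- Averaging operator `𝕊_x`. -/
noncomputable def Slat (f : ℝ → ℝ) (s : ℝ) : ℝ :=
  (f (s + 1/2) + f (s - 1/2)) / 2

/-- The quadratic lattice `x(s) = s(s+β1)`. -/
noncomputable def latt (β1 : ℝ) : ℝ → ℝ := fun s => s * (s + β1)

/-- The monic basis `F_n(x(s)) = (-4)^{-n} (-β1-2s+1/2)_n (β1+2s+1/2)_n`. -/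
noncomputable def Fb (β1 : ℝ) (n : ℕ) (s : ℝ) : ℝ :=
  ((-4 : ℝ) ^ n)⁻¹ * poch (-β1 - 2*s + 1/2) n * poch (β1 + 2*s + 1/2) n

lemma poch_zero (a : ℝ) : poch a 0 = 1 := by simp [poch]

lemma poch_succ (a : ℝ) (n : ℕ) : poch a (n+1) = poch a n * (a + n) := by
  simp [poch, Finset.prod_range_succ]

lemma poch_succ' (a : ℝ) (n : ℕ) : poch a (n+1) = a * poch (a+1) n := by
  simp only [poch, Finset.prod_range_succ']
  rw [mul_comm]
  congr 1
  · simp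
  · apply Finset.prod_congr rfl; intro k _; push_cast; ring

lemma poch_one_eq (n : ℕ) : poch 1 n = n.factorial := by
  induction n with
  | zero => simp [poch]
  | succ n ih => rw [poch_succ, ih, Nat.factorial_succ]; push_cast; ring

lemma poch_zero_left (n : ℕ) : poch 0 (n+1) = 0 := by
  rw [poch_succ']; simp

noncomputable def cf (β1 : ℝ) (n j : ℕ) : ℝ :=
  (-1 : ℝ)^j * (2 : ℝ)^(2*(j : ℤ) - 2*(n : ℤ)) * poch ((n : ℝ) - (j : ℝ) + 1) j
    * poch (β1 + (j : ℝ) - 1/2) (2*(n - j)) / (Nat.factorial j : ℝ)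

lemma Fb_succ (β1 s : ℝ) (j : ℕ) :
    Fb β1 (j+1) s = Fb β1 j s * (s*(s+β1) + (β1^2 - ((j:ℝ)+1/2)^2)/4) := by
  simp only [Fb, poch_succ, pow_succ, mul_inv]
  have h4 : ((-4:ℝ)^j)⁻¹ ≠ 0 := by positivity
  field_simp
  ring

lemma two_zpow_add (a b : ℤ) : (2:ℝ)^(a+b) = 2^a * 2^b := zpow_add₀ two_ne_zero a b

lemma cf_top (β1 : ℝ) (n : ℕ) : cf β1 n (n+1) = 0 := by
  have h : ((n:ℝ)) - ((n+1:ℕ):ℝ) + 1 = 0 := by push_cast; ring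
  simp only [cf, h, poch_zero_left]
  ring

lemma cf_zero (β1 : ℝ) (n : ℕ) :
    cf β1 (n+1) 0 = ((n:ℝ)*(β1+(n:ℝ)) + (β1^2 - ((0:ℝ)+1/2)^2)/4) * cf β1 n 0 := by
  simp only [cf, Nat.sub_zero, Nat.cast_zero, pow_zero, Nat.factorial_zero, Nat.cast_one,
    div_one, poch_zero]
  have h1 : 2*(n+1) = (2*n+1)+1 := by ring
  rw [h1, poch_succ, poch_succ]
  have h2 : 2*(0:ℤ) - 2*((n+1:ℕ):ℤ) = (2*(0:ℤ) - 2*(n:ℤ)) + (-2) := by push_cast; ring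
  rw [h2, two_zpow_add]
  have h3 : (2:ℝ)^(-2:ℤ) = 1/4 := by norm_num
  rw [h3]
  push_cast
  ring

lemma cf_diag (β1 : ℝ) (n : ℕ) : cf β1 n n = (-1:ℝ)^n := by
  have h1 : (n:ℝ) - (n:ℝ) + 1 = 1 := by ring
  have h2 : 2*(n:ℤ) - 2*(n:ℤ) = 0 := by ring
  simp only [cf, h1, h2, Nat.sub_self, mul_zero, poch_zero, poch_one_eq, zpow_zero]
  have : (n.factorial : ℝ) ≠ 0 := by positivity
  field_simp

lemma cf_rec_lt (β1 : ℝ) (j m : ℕ) :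
    cf β1 (j+m+2) (j+1)
      = (((j+m+1:ℕ):ℝ)*(β1+((j+m+1:ℕ):ℝ)) + (β1^2 - (((j+1:ℕ):ℝ)+1/2)^2)/4) * cf β1 (j+m+1) (j+1)
        - cf β1 (j+m+1) j := by
  simp only [cf]
  rw [show j+m+2-(j+1) = m+1 from by omega,
      show j+m+1-(j+1) = m from by omega,
      show j+m+1-j = m+1 from by omega]
  rw [show ((j+m+2:ℕ):ℝ) - ((j+1:ℕ):ℝ) + 1 = (m:ℝ)+2 from by push_cast; ring,
      show ((j+m+1:ℕ):ℝ) - ((j+1:ℕ):ℝ) + 1 = (m:ℝ)+1 from by push_cast; ring,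
      show ((j+m+1:ℕ):ℝ) - ((j:ℕ):ℝ) + 1 = (m:ℝ)+2 from by push_cast; ring]
  rw [show 2*(m+1) = 2*m+1+1 from by omega]
  rw [poch_succ ((m:ℝ)+2) j]
  rw [show poch ((m:ℝ)+1) (j+1) = ((m:ℝ)+1) * poch ((m:ℝ)+2) j from by
        rw [poch_succ', show (m:ℝ)+1+1 = (m:ℝ)+2 from by ring]]
  rw [poch_succ (β1+((j+1:ℕ):ℝ)-1/2) (2*m+1), poch_succ (β1+((j+1:ℕ):ℝ)-1/2) (2*m)]
  rw [show poch (β1+((j:ℕ):ℝ)-1/2) (2*m+1+1)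
        = (β1+(j:ℝ)-1/2) * (poch (β1+((j+1:ℕ):ℝ)-1/2) (2*m) * (β1+((j+1:ℕ):ℝ)-1/2+((2*m:ℕ):ℝ))) from by
        rw [poch_succ', poch_succ]
        have : β1 + ((j:ℕ):ℝ) - 1/2 + 1 = β1+((j+1:ℕ):ℝ)-1/2 := by push_cast; ring
        rw [this]]
  rw [show (2:ℝ)^(2*((j+1:ℕ):ℤ) - 2*((j+m+2:ℕ):ℤ)) = (2:ℝ)^(-2*(m:ℤ)-2) from by
        congr 1; push_cast; ring]
  rw [show (2:ℝ)^(2*((j+1:ℕ):ℤ) - 2*((j+m+1:ℕ):ℤ)) = (2:ℝ)^(-2*(m:ℤ)-2) * 4 from by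
        rw [show 2*((j+1:ℕ):ℤ) - 2*((j+m+1:ℕ):ℤ) = (-2*(m:ℤ)-2)+2 from by push_cast; ring,
          two_zpow_add]; norm_num]
  rw [show (2:ℝ)^(2*((j:ℕ):ℤ) - 2*((j+m+1:ℕ):ℤ)) = (2:ℝ)^(-2*(m:ℤ)-2) from by
        congr 1; push_cast; ring]
  simp only [Nat.factorial_succ, pow_succ]
  have hf : (j.factorial : ℝ) ≠ 0 := by positivity
  have hj1 : ((j:ℝ)+1) ≠ 0 := by positivity
  push_cast
  field_simp
  ring

lemma cf_rec (β1 : ℝ) (n j : ℕ) (hj : j ≤ n) :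
    cf β1 (n+1) (j+1)
      = (((n:ℕ):ℝ)*(β1+((n:ℕ):ℝ)) + (β1^2 - (((j+1:ℕ):ℝ)+1/2)^2)/4) * cf β1 n (j+1)
        - cf β1 n j := by
  rcases Nat.eq_or_lt_of_le hj with rfl | hlt
  · rw [cf_top, cf_diag, cf_diag]
    ring
  · obtain ⟨m, rfl⟩ : ∃ m, n = j + m + 1 := ⟨n - j - 1, by omega⟩
    exact cf_rec_lt β1 j m

/-- the connection formula
`(-s)_n (s+β1)_n = Σ_{j=0}^n (-1)^j 2^{2j-2n} (n-j+1)_j (β1+j-1/2)_{2n-2j} / j! · F_j(x(s))`. -/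
theorem connection_formula (β1 s : ℝ) (n : ℕ) :
    poch (-s) n * poch (s + β1) n
      = ∑ j ∈ Finset.range (n + 1),
          (-1 : ℝ)^j * (2 : ℝ)^(2*(j : ℤ) - 2*(n : ℤ)) * poch ((n : ℝ) - (j : ℝ) + 1) j
              * poch (β1 + (j : ℝ) - 1/2) (2*(n - j)) / (Nat.factorial j : ℝ)
            * Fb β1 j s := by
  have key : ∀ n : ℕ, poch (-s) n * poch (s + β1) n
      = ∑ j ∈ Finset.range (n + 1), cf β1 n j * Fb β1 j s := by
    intro n
    induction n with
    | zero => simp [cf, poch, Fb]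
    | succ n ih =>
      have hL : poch (-s) (n+1) * poch (s+β1) (n+1)
          = (poch (-s) n * poch (s+β1) n) * (((n:ℝ)*(β1+(n:ℝ))) - s*(s+β1)) := by
        rw [poch_succ, poch_succ]; ring
      rw [hL, ih, Finset.sum_mul]
      have hterm : ∀ j, cf β1 n j * Fb β1 j s * (((n:ℝ)*(β1+(n:ℝ))) - s*(s+β1))
          = (((n:ℝ)*(β1+(n:ℝ))) + (β1^2 - (((j:ℕ):ℝ)+1/2)^2)/4) * (cf β1 n j * Fb β1 j s)
            - cf β1 n j * Fb β1 (j+1) s := by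
        intro j; rw [Fb_succ]; ring
      calc ∑ j ∈ Finset.range (n+1), cf β1 n j * Fb β1 j s * (((n:ℝ)*(β1+(n:ℝ))) - s*(s+β1))
          = ∑ j ∈ Finset.range (n+1),
              ((((n:ℝ)*(β1+(n:ℝ))) + (β1^2 - (((j:ℕ):ℝ)+1/2)^2)/4) * (cf β1 n j * Fb β1 j s)
                - cf β1 n j * Fb β1 (j+1) s) :=
            Finset.sum_congr rfl (fun j _ => hterm j)
        _ = (∑ j ∈ Finset.range (n+1),
              (((n:ℝ)*(β1+(n:ℝ))) + (β1^2 - (((j:ℕ):ℝ)+1/2)^2)/4) * (cf β1 n j * Fb β1 j s))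
            - ∑ j ∈ Finset.range (n+1), cf β1 n j * Fb β1 (j+1) s := Finset.sum_sub_distrib _ _
        _ = (∑ j ∈ Finset.range (n+2),
              (((n:ℝ)*(β1+(n:ℝ))) + (β1^2 - (((j:ℕ):ℝ)+1/2)^2)/4) * (cf β1 n j * Fb β1 j s))
            - ∑ j ∈ Finset.range (n+1), cf β1 n j * Fb β1 (j+1) s := by
            rw [Finset.sum_range_succ (n := n+1), cf_top]
            ring
        _ = ((∑ j ∈ Finset.range (n+1),
              (((n:ℝ)*(β1+(n:ℝ))) + (β1^2 - (((j+1:ℕ):ℝ)+1/2)^2)/4) * (cf β1 n (j+1) * Fb β1 (j+1) s))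
              + (((n:ℝ)*(β1+(n:ℝ))) + (β1^2 - (((0:ℕ):ℝ)+1/2)^2)/4) * (cf β1 n 0 * Fb β1 0 s))
            - ∑ j ∈ Finset.range (n+1), cf β1 n j * Fb β1 (j+1) s := by
            rw [Finset.sum_range_succ']
        _ = (∑ j ∈ Finset.range (n+1),
              ((((n:ℝ)*(β1+(n:ℝ))) + (β1^2 - (((j+1:ℕ):ℝ)+1/2)^2)/4) * cf β1 n (j+1) - cf β1 n j)
                * Fb β1 (j+1) s)
              + (((n:ℝ)*(β1+(n:ℝ))) + (β1^2 - (((0:ℕ):ℝ)+1/2)^2)/4) * (cf β1 n 0 * Fb β1 0 s) := by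
            rw [add_sub_right_comm, ← Finset.sum_sub_distrib]
            congr 1
            apply Finset.sum_congr rfl
            intro j _
            ring
        _ = (∑ j ∈ Finset.range (n+1), cf β1 (n+1) (j+1) * Fb β1 (j+1) s)
              + cf β1 (n+1) 0 * Fb β1 0 s := by
            congr 1
            · apply Finset.sum_congr rfl
              intro j hj
              rw [cf_rec β1 n j (by simpa using Nat.lt_succ_iff.mp (Finset.mem_range.mp hj))]
            · rw [cf_zero]
              push_cast
              ring
        _ = ∑ j ∈ Finset.range (n+2), cf β1 (n+1) j * Fb β1 j s :=
            (Finset.sum_range_succ' (fun j => cf β1 (n+1) j * Fb β1 j s) (n+1)).symm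
  exact key n
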